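/- Suppose that for every nonzero b ∈ EuclideanSpace ℝ (Fin p) there exists a pair (i,j) ∈ D with ⟪b, X_j − X_i⟫ > 0. Then the log partial likelihood attains its global maximum: there exists β̂ ∈ EuclideanSpace ℝ (Fin p) such that L(β̂) ≥ L(β) for all β, i.e., the maximum partial likelihood estimator exists. -/

import Mathlib

open Finset

/-- The Cox log partial likelihood. -/
noncomputable def coxLogPartialLik (n p : ℕ) (Y : Fin n → ℝ) (Δ : Fin n → Bool)
    (X : Fin n → EuclideanSpace ℝ (Fin p)) (β : EuclideanSpace ℝ (Fin p)) : ℝ :=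
  (1 / (n : ℝ)) * ∑ i ∈ Finset.univ.filter (fun i => Δ i = true),
    ((inner ℝ (X i) β : ℝ) -
      Real.log ((1 / (n : ℝ)) * ∑ j ∈ Finset.univ.filter (fun j => Y i ≤ Y j),
        Real.exp (inner ℝ (X j) β : ℝ)))

section Aux

variable {n p : ℕ} (Y : Fin n → ℝ) (Δ : Fin n → Bool) (X : Fin n → EuclideanSpace ℝ (Fin p))

/-- positivity of the inner sum -/
lemma cox_inner_sum_pos (hn : 1 ≤ n) (i : Fin n) (β : EuclideanSpace ℝ (Fin p)) :
    0 < (1 / (n : ℝ)) * ∑ j ∈ Finset.univ.filter (fun j => Y i ≤ Y j),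
        Real.exp (inner ℝ (X j) β : ℝ) := by
  have hn0 : (0:ℝ) < n := by exact_mod_cast hn
  apply mul_pos (by positivity)
  apply Finset.sum_pos (fun j _ => Real.exp_pos _)
  exact ⟨i, by simp⟩

/-- single term bound using a member of the sum -/
lemma cox_term_le (hn : 1 ≤ n) (i j : Fin n) (hij : Y i ≤ Y j) (β : EuclideanSpace ℝ (Fin p)) :
    (inner ℝ (X i) β : ℝ) -
      Real.log ((1 / (n : ℝ)) * ∑ k ∈ Finset.univ.filter (fun k => Y i ≤ Y k),
        Real.exp (inner ℝ (X k) β : ℝ))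
      ≤ Real.log n - (inner ℝ β (X j - X i) : ℝ) := by
  have hn0 : (0:ℝ) < n := by exact_mod_cast hn
  set S := ∑ k ∈ Finset.univ.filter (fun k => Y i ≤ Y k), Real.exp (inner ℝ (X k) β : ℝ) with hS
  have hSpos : 0 < S := Finset.sum_pos (fun k _ => Real.exp_pos _) ⟨i, by simp⟩
  have hle : Real.exp (inner ℝ (X j) β : ℝ) ≤ S := by
    rw [hS]
    exact Finset.single_le_sum (f := fun k => Real.exp (inner ℝ (X k) β : ℝ))
      (fun k _ => (Real.exp_pos _).le) (by simp [hij])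
  have hlog : (inner ℝ (X j) β : ℝ) ≤ Real.log S := by
    have := Real.log_le_log (Real.exp_pos _) hle
    rwa [Real.log_exp] at this
  have hmul : Real.log ((1 / (n : ℝ)) * S) = -Real.log n + Real.log S := by
    rw [Real.log_mul (by positivity) (ne_of_gt hSpos), one_div, Real.log_inv]
  rw [hmul, inner_sub_right, real_inner_comm (X j) β, real_inner_comm (X i) β]
  linarith

end Aux

/-- If for every nonzero `b` there is a pair `(i, j)` in the comparison set
`D = {(i,j) : Δ i = 1, Y j ≥ Y i, j ≠ i}` with `⟪b, X j - X i⟫ > 0`, then the log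
partial likelihood attains its global maximum: the MPLE exists. -/
theorem coxLogPartialLik_exists_max (n p : ℕ) (hn : 1 ≤ n) (hp : 1 ≤ p)
    (Y : Fin n → ℝ) (Δ : Fin n → Bool) (X : Fin n → EuclideanSpace ℝ (Fin p))
    (hcond : ∀ b : EuclideanSpace ℝ (Fin p), b ≠ 0 →
      ∃ i j : Fin n, Δ i = true ∧ Y i ≤ Y j ∧ j ≠ i ∧ 0 < (inner ℝ b (X j - X i) : ℝ)) :
    ∃ βhat : EuclideanSpace ℝ (Fin p), ∀ β : EuclideanSpace ℝ (Fin p),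
      coxLogPartialLik n p Y Δ X β ≤ coxLogPartialLik n p Y Δ X βhat := by
  classical
  have hn0 : (0:ℝ) < n := by exact_mod_cast hn
  -- continuity of L
  have hLcont : Continuous (coxLogPartialLik n p Y Δ X) := by
    unfold coxLogPartialLik
    apply Continuous.mul continuous_const
    apply continuous_finset_sum
    intro i _
    apply Continuous.sub (continuous_const.inner continuous_id)
    apply Continuous.log
    · apply Continuous.mul continuous_const
      exact continuous_finset_sum _ (fun j _ =>
        Real.continuous_exp.comp (continuous_const.inner continuous_id))
    · intro β
      exact ne_of_gt (cox_inner_sum_pos Y X hn i β)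
  -- comparison finset
  set D : Finset (Fin n × Fin n) :=
    (Finset.univ ×ˢ Finset.univ).filter
      (fun q => Δ q.1 = true ∧ Y q.1 ≤ Y q.2 ∧ q.2 ≠ q.1) with hDdef
  have hb0 : (EuclideanSpace.single (⟨0, hp⟩ : Fin p) (1:ℝ)) ≠ 0 := by
    intro h
    have := congrArg (fun v => v ⟨0, hp⟩) h
    simp [EuclideanSpace.single_apply] at this
  haveI : Nontrivial (EuclideanSpace ℝ (Fin p)) := nontrivial_of_ne _ 0 hb0
  obtain ⟨i0, j0, h1, h2, h3, _⟩ := hcond _ hb0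
  have hDne : D.Nonempty := ⟨(i0, j0), by simp [hDdef, h1, h2, h3]⟩
  set g : EuclideanSpace ℝ (Fin p) → ℝ := fun b => D.sup' hDne (fun q => (inner ℝ b (X q.2 - X q.1) : ℝ)) with hg
  have hgcont : Continuous g :=
    Continuous.finset_sup'_apply hDne (fun q _ => continuous_id.inner continuous_const)
  -- min of g on sphere
  have hsne : (Metric.sphere (0 : EuclideanSpace ℝ (Fin p)) 1).Nonempty := NormedSpace.sphere_nonempty.mpr zero_le_one
  obtain ⟨bmin, hbmem, hbmin'⟩ :=
    (isCompact_sphere (0:EuclideanSpace ℝ (Fin p)) 1).exists_isMinOn hsne hgcont.continuousOn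
  have hbmin : ∀ b ∈ Metric.sphere (0:EuclideanSpace ℝ (Fin p)) 1, g bmin ≤ g b := fun b hb => hbmin' hb
  set c₀ := g bmin with hc₀
  have hbminne : bmin ≠ 0 := by
    intro h
    rw [h] at hbmem
    simp at hbmem
  have hc₀pos : 0 < c₀ := by
    obtain ⟨i, j, hi, hij, hji, hpos⟩ := hcond bmin hbminne
    have hmem : (i, j) ∈ D := by simp [hDdef, hi, hij, hji]
    calc (0:ℝ) < (inner ℝ bmin (X j - X i) : ℝ) := hpos
      _ ≤ c₀ := by
          rw [hc₀, hg]
          exact Finset.le_sup' (fun q => (inner ℝ bmin (X q.2 - X q.1) : ℝ)) hmem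
  -- key: for β ≠ 0, a pair q ∈ D with c₀ * ‖β‖ ≤ inner ℝ β (X q.2 - X q.1)
  have hkey : ∀ β : EuclideanSpace ℝ (Fin p), β ≠ 0 → ∃ q ∈ D, c₀ * ‖β‖ ≤ (inner ℝ β (X q.2 - X q.1) : ℝ) := by
    intro β hβ
    set b := ‖β‖⁻¹ • β with hb
    have hβn : (0:ℝ) < ‖β‖ := norm_pos_iff.mpr hβ
    have hbmem' : b ∈ Metric.sphere (0:EuclideanSpace ℝ (Fin p)) 1 := by
      simp [hb, norm_smul, abs_of_nonneg (inv_nonneg.mpr hβn.le), inv_mul_cancel₀ hβn.ne']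
    obtain ⟨q, hq, hqe⟩ := Finset.exists_mem_eq_sup' hDne (fun q => (inner ℝ b (X q.2 - X q.1) : ℝ))
    refine ⟨q, hq, ?_⟩
    have h1 : c₀ ≤ (inner ℝ b (X q.2 - X q.1) : ℝ) := by
      rw [← hqe]; exact hbmin b hbmem'
    have h2 : (inner ℝ β (X q.2 - X q.1) : ℝ) = ‖β‖ * (inner ℝ b (X q.2 - X q.1) : ℝ) := by
      rw [hb, real_inner_smul_left]
      field_simp
    rw [h2]
    calc c₀ * ‖β‖ ≤ (inner ℝ b (X q.2 - X q.1) : ℝ) * ‖β‖ := by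
          exact mul_le_mul_of_nonneg_right h1 hβn.le
      _ = ‖β‖ * (inner ℝ b (X q.2 - X q.1) : ℝ) := mul_comm _ _
  -- coercivity bound : coxLogPartialLik n p Y Δ X β ≤ C - (c₀/n) ‖β‖ for β ≠ 0
  set m := (Finset.univ.filter (fun i => Δ i = true)).card with hm
  have hbound : ∀ β : EuclideanSpace ℝ (Fin p), β ≠ 0 → coxLogPartialLik n p Y Δ X β ≤ (1/(n:ℝ)) * (m * Real.log n - c₀ * ‖β‖) := by
    intro β hβ
    obtain ⟨q, hqD, hqle⟩ := hkey β hβ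
    have hqΔ : Δ q.1 = true := by
      simp only [hDdef, Finset.mem_filter] at hqD; exact hqD.2.1
    have hqY : Y q.1 ≤ Y q.2 := by
      simp only [hDdef, Finset.mem_filter] at hqD; exact hqD.2.2.1
    have hq1mem : q.1 ∈ Finset.univ.filter (fun i => Δ i = true) := by simp [hqΔ]
    unfold coxLogPartialLik
    apply mul_le_mul_of_nonneg_left _ (by positivity)
    rw [← Finset.add_sum_erase _ _ hq1mem]
    have hterm : (inner ℝ (X q.1) β : ℝ) -
        Real.log ((1 / (n : ℝ)) * ∑ j ∈ Finset.univ.filter (fun j => Y q.1 ≤ Y j),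
          Real.exp (inner ℝ (X j) β : ℝ)) ≤ Real.log n - c₀ * ‖β‖ := by
      calc _ ≤ Real.log n - (inner ℝ β (X q.2 - X q.1) : ℝ) := cox_term_le Y X hn q.1 q.2 hqY β
        _ ≤ Real.log n - c₀ * ‖β‖ := by linarith
    have hrest : ∑ i ∈ (Finset.univ.filter (fun i => Δ i = true)).erase q.1,
        ((inner ℝ (X i) β : ℝ) -
          Real.log ((1 / (n : ℝ)) * ∑ j ∈ Finset.univ.filter (fun j => Y i ≤ Y j),
            Real.exp (inner ℝ (X j) β : ℝ))) ≤ (m - 1) * Real.log n := by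
      have : ∀ i ∈ (Finset.univ.filter (fun i => Δ i = true)).erase q.1,
          ((inner ℝ (X i) β : ℝ) -
            Real.log ((1 / (n : ℝ)) * ∑ j ∈ Finset.univ.filter (fun j => Y i ≤ Y j),
              Real.exp (inner ℝ (X j) β : ℝ))) ≤ Real.log n := by
        intro i _
        have := cox_term_le Y X hn i i le_rfl β
        simpa using this
      calc _ ≤ ∑ _i ∈ (Finset.univ.filter (fun i => Δ i = true)).erase q.1, Real.log n :=
            Finset.sum_le_sum this
        _ = ((Finset.univ.filter (fun i => Δ i = true)).erase q.1).card * Real.log n := by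
            rw [Finset.sum_const, nsmul_eq_mul]
        _ = (m - 1) * Real.log n := by
            rw [Finset.card_erase_of_mem hq1mem, ← hm]
            have hm1 : 1 ≤ m := Finset.card_pos.mpr ⟨q.1, hq1mem⟩
            push_cast [Nat.cast_sub hm1]
            ring_nf
    have hlogn : (0:ℝ) ≤ Real.log n := Real.log_nonneg (by exact_mod_cast hn)
    nlinarith [hterm, hrest]
  -- choose radius
  set C := (1/(n:ℝ)) * (m * Real.log n) with hC
  set c := (1/(n:ℝ)) * c₀ with hc
  have hcpos : 0 < c := by positivity
  set R := max 1 ((C - coxLogPartialLik n p Y Δ X 0) / c) with hR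
  have hR1 : (1:ℝ) ≤ R := le_max_left _ _
  have hfar : ∀ β : EuclideanSpace ℝ (Fin p), R ≤ ‖β‖ → coxLogPartialLik n p Y Δ X β ≤ coxLogPartialLik n p Y Δ X 0 := by
    intro β hβR
    have hβ : β ≠ 0 := by
      intro h; rw [h] at hβR; simp at hβR; linarith
    have h1 := hbound β hβ
    have h2 : (C - coxLogPartialLik n p Y Δ X 0) / c ≤ ‖β‖ := le_trans (le_max_right _ _) hβR
    have h3 : C - coxLogPartialLik n p Y Δ X 0 ≤ c * ‖β‖ := by
      rw [div_le_iff₀ hcpos] at h2; linarith [h2]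
    have h4 : (1/(n:ℝ)) * (m * Real.log n - c₀ * ‖β‖) = C - c * ‖β‖ := by
      rw [hC, hc]; ring
    linarith [h1, h4.le]
  -- maximize on closed ball
  have h0mem : (0:EuclideanSpace ℝ (Fin p)) ∈ Metric.closedBall (0:EuclideanSpace ℝ (Fin p)) R := by
    simp; linarith
  obtain ⟨βhat, hβhatmem, hβhatmax'⟩ :=
    (isCompact_closedBall (0:EuclideanSpace ℝ (Fin p)) R).exists_isMaxOn ⟨0, h0mem⟩ hLcont.continuousOn
  have hβhatmax : ∀ β ∈ Metric.closedBall (0:EuclideanSpace ℝ (Fin p)) R, coxLogPartialLik n p Y Δ X β ≤ coxLogPartialLik n p Y Δ X βhat := fun β hβ => hβhatmax' hβ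
  refine ⟨βhat, fun β => ?_⟩
  by_cases hβ : ‖β‖ ≤ R
  · exact hβhatmax β (by simpa [Metric.mem_closedBall] using hβ)
  · have := hfar β (le_of_lt (lt_of_not_ge hβ))
    exact le_trans this (hβhatmax 0 h0mem)
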